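/- The empirical Tukey depth of the origin equals the minimum over all direction cones of the cone depth: D(0|X) = min over C ∈ 𝒞(X) of (1/n)·min{#X_C^+, #X_C^-}, where 𝒞(X) is the (finite) set of all direction cones. -/

import Mathlib

open Finset
open scoped Classical

noncomputable def tukeyCount {d n : ℕ} (x : Fin n → EuclideanSpace ℝ (Fin d))
    (z : EuclideanSpace ℝ (Fin d)) : ℕ :=
  sInf {k : ℕ | ∃ r : EuclideanSpace ℝ (Fin d), ‖r‖ = 1 ∧
    k = (Finset.univ.filter fun i => (inner ℝ z r : ℝ) ≤ inner ℝ (x i) r).card}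

noncomputable def tukeyDepth {d n : ℕ} (x : Fin n → EuclideanSpace ℝ (Fin d))
    (z : EuclideanSpace ℝ (Fin d)) : ℝ :=
  (tukeyCount x z : ℝ) / n

def InGeneralPosition {d n : ℕ} (x : Fin n → EuclideanSpace ℝ (Fin d)) : Prop :=
  ∀ s : Finset (EuclideanSpace ℝ (Fin d)),
    ↑s ⊆ insert (0 : EuclideanSpace ℝ (Fin d)) (Set.range x) → s.card ≤ d + 1 →
      AffineIndependent ℝ (fun p : s => (p : EuclideanSpace ℝ (Fin d)))

lemma dense_good {d n : ℕ} (x : Fin n → EuclideanSpace ℝ (Fin d)) (hx : ∀ i, x i ≠ 0) :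
    Dense {r : EuclideanSpace ℝ (Fin d) | ∀ i, (inner ℝ (x i) r : ℝ) ≠ 0} := by
  have heq : {r : EuclideanSpace ℝ (Fin d) | ∀ i, (inner ℝ (x i) r : ℝ) ≠ 0}
      = ⋂ i, {r : EuclideanSpace ℝ (Fin d) | (inner ℝ (x i) r : ℝ) ≠ 0} := by
    ext r; simp [Set.mem_iInter]
  rw [heq]
  have hker : ∀ i, {r : EuclideanSpace ℝ (Fin d) | (inner ℝ (x i) r : ℝ) = 0}
      = ((innerSL ℝ (x i)).ker : Set (EuclideanSpace ℝ (Fin d))) := by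
    intro i; ext r
    simp [LinearMap.mem_ker]
  refine dense_iInter_of_isOpen (fun i => ?_) (fun i => ?_)
  · have : {r : EuclideanSpace ℝ (Fin d) | (inner ℝ (x i) r : ℝ) ≠ 0}
        = {r : EuclideanSpace ℝ (Fin d) | (inner ℝ (x i) r : ℝ) = 0}ᶜ := rfl
    rw [this, hker]
    exact (ContinuousLinearMap.isClosed_ker (innerSL ℝ (x i))).isOpen_compl
  · have : {r : EuclideanSpace ℝ (Fin d) | (inner ℝ (x i) r : ℝ) ≠ 0}
        = {r : EuclideanSpace ℝ (Fin d) | (inner ℝ (x i) r : ℝ) = 0}ᶜ := rfl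
    rw [this, ← interior_eq_empty_iff_dense_compl, hker]
    by_contra h
    have := ((innerSL ℝ (x i)).ker).eq_top_of_nonempty_interior'
      (Set.nonempty_iff_ne_empty.2 h)
    have hmem : x i ∈ (innerSL ℝ (x i)).ker := this ▸ Submodule.mem_top
    rw [LinearMap.mem_ker] at hmem
    exact inner_self_ne_zero.2 (hx i) hmem

theorem stmt14 {d n : ℕ} (hd : 0 < d) (x : Fin n → EuclideanSpace ℝ (Fin d))
    (hgp : InGeneralPosition x) (hx : ∀ i, x i ≠ 0) :
    tukeyDepth x 0 = sInf {v : ℝ | ∃ r : EuclideanSpace ℝ (Fin d),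
      (∀ i, (inner ℝ (x i) r : ℝ) ≠ 0) ∧
      v = (min ((Finset.univ.filter fun i => (0 : ℝ) < inner ℝ (x i) r).card)
          ((Finset.univ.filter fun i => (inner ℝ (x i) r : ℝ) < 0).card) : ℝ) / n} := by
  classical
  set S : Set ℕ := {k : ℕ | ∃ r : EuclideanSpace ℝ (Fin d), ‖r‖ = 1 ∧
    k = (Finset.univ.filter fun i =>
      (inner ℝ (0 : EuclideanSpace ℝ (Fin d)) r : ℝ) ≤ inner ℝ (x i) r).card} with hS
  set T : Set ℕ := {m : ℕ | ∃ r : EuclideanSpace ℝ (Fin d),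
      (∀ i, (inner ℝ (x i) r : ℝ) ≠ 0) ∧
      m = min ((Finset.univ.filter fun i => (0 : ℝ) < inner ℝ (x i) r).card)
          ((Finset.univ.filter fun i => (inner ℝ (x i) r : ℝ) < 0).card)} with hT
  -- the good set is dense and nonempty
  have hG : Dense {r : EuclideanSpace ℝ (Fin d) | ∀ i, (inner ℝ (x i) r : ℝ) ≠ 0} :=
    dense_good x hx
  have hTne : T.Nonempty := by
    obtain ⟨r, hr⟩ := hG.nonempty
    exact ⟨_, r, hr, rfl⟩
  -- T → S : each element of T is an element of S
  have hTS : ∀ m ∈ T, m ∈ S := by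
    rintro m ⟨r, hr, rfl⟩
    by_cases hn : n = 0
    · subst hn
      refine ⟨EuclideanSpace.single (⟨0, hd⟩ : Fin d) (1 : ℝ), ?_, ?_⟩
      · rw [EuclideanSpace.norm_single]; norm_num
      · simp
    · have hr0 : r ≠ 0 := by
        intro h0
        exact hr ⟨0, Nat.pos_of_ne_zero hn⟩ (by simp [h0])
      have hnr : (0 : ℝ) < ‖r‖ := norm_pos_iff.2 hr0
      set u : EuclideanSpace ℝ (Fin d) := ‖r‖⁻¹ • r with hu
      have hun : ‖u‖ = 1 := norm_smul_inv_norm hr0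
      have hiu : ∀ i, (inner ℝ (x i) u : ℝ) = ‖r‖⁻¹ * inner ℝ (x i) r := by
        intro i; rw [hu, real_inner_smul_right]
      have hpos : (Finset.univ.filter fun i =>
          (inner ℝ (0 : EuclideanSpace ℝ (Fin d)) u : ℝ) ≤ inner ℝ (x i) u)
          = (Finset.univ.filter fun i => (0 : ℝ) < inner ℝ (x i) r) := by
        apply Finset.filter_congr
        intro i _
        rw [inner_zero_left, hiu]
        constructor
        · intro h
          rcases (mul_nonneg_iff_of_pos_left (by positivity)).1 h |>.lt_or_eq with h' | h'
          · exact h'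
          · exact absurd h'.symm (hr i)
        · intro h; positivity
      have hneg : (Finset.univ.filter fun i =>
          (inner ℝ (0 : EuclideanSpace ℝ (Fin d)) (-u) : ℝ) ≤ inner ℝ (x i) (-u))
          = (Finset.univ.filter fun i => (inner ℝ (x i) r : ℝ) < 0) := by
        apply Finset.filter_congr
        intro i _
        rw [inner_zero_left, inner_neg_right, hiu]
        constructor
        · intro h
          have h2 : ‖r‖⁻¹ * inner ℝ (x i) r ≤ 0 := by linarith
          have hip : (0:ℝ) < ‖r‖⁻¹ := by positivity
          have h5 : (inner ℝ (x i) r : ℝ) ≤ 0 := by nlinarith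
          exact lt_of_le_of_ne h5 (hr i)
        · intro h
          have : ‖r‖⁻¹ * inner ℝ (x i) r < 0 := mul_neg_of_pos_of_neg (by positivity) h
          linarith
      rcases min_cases ((Finset.univ.filter fun i => (0 : ℝ) < inner ℝ (x i) r).card)
          ((Finset.univ.filter fun i => (inner ℝ (x i) r : ℝ) < 0).card) with
        ⟨hmin, _⟩ | ⟨hmin, _⟩
      · exact ⟨u, hun, by rw [hmin, hpos]⟩
      · exact ⟨-u, by rw [norm_neg, hun], by rw [hmin, hneg]⟩
  -- S → T : each element of S dominates an element of T
  have hST : ∀ k ∈ S, ∃ m ∈ T, m ≤ k := by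
    rintro k ⟨r, _, rfl⟩
    set U : Set (EuclideanSpace ℝ (Fin d)) :=
      {r' | ∀ i, (inner ℝ (x i) r : ℝ) < 0 → (inner ℝ (x i) r' : ℝ) < 0} with hU
    have hUopen : IsOpen U := by
      have : U = ⋂ i, {r' : EuclideanSpace ℝ (Fin d) |
          (inner ℝ (x i) r : ℝ) < 0 → (inner ℝ (x i) r' : ℝ) < 0} := by
        ext r'; simp [hU, Set.mem_iInter]
      rw [this]
      refine isOpen_iInter_of_finite fun i => ?_
      by_cases h : (inner ℝ (x i) r : ℝ) < 0
      · have heq2 : {r' : EuclideanSpace ℝ (Fin d) |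
            (inner ℝ (x i) r : ℝ) < 0 → (inner ℝ (x i) r' : ℝ) < 0}
            = (innerSL ℝ (x i)) ⁻¹' Set.Iio 0 := by
          ext r'
          simp only [Set.mem_setOf_eq, Set.mem_preimage, Set.mem_Iio, innerSL_apply_apply]
          exact ⟨fun hh => hh h, fun hh _ => hh⟩
        rw [heq2]
        exact isOpen_Iio.preimage (innerSL ℝ (x i)).continuous
      · have heq2 : {r' : EuclideanSpace ℝ (Fin d) |
            (inner ℝ (x i) r : ℝ) < 0 → (inner ℝ (x i) r' : ℝ) < 0} = Set.univ := by
          ext r'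
          simp only [Set.mem_setOf_eq, Set.mem_univ, iff_true]
          intro hc; exact absurd hc h
        rw [heq2]; exact isOpen_univ
    obtain ⟨r', hr'G, hr'U⟩ := hG.exists_mem_open hUopen ⟨r, fun i h => h⟩
    refine ⟨_, ⟨r', hr'G, rfl⟩, ?_⟩
    calc min ((Finset.univ.filter fun i => (0 : ℝ) < inner ℝ (x i) r').card)
          ((Finset.univ.filter fun i => (inner ℝ (x i) r' : ℝ) < 0).card)
        ≤ (Finset.univ.filter fun i => (0 : ℝ) < inner ℝ (x i) r').card := min_le_left _ _
      _ ≤ (Finset.univ.filter fun i =>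
            (inner ℝ (0 : EuclideanSpace ℝ (Fin d)) r : ℝ) ≤ inner ℝ (x i) r).card := by
          apply Finset.card_le_card
          intro i hi
          rw [Finset.mem_filter] at hi ⊢
          refine ⟨Finset.mem_univ i, ?_⟩
          rw [inner_zero_left]
          by_contra hneg
          push_neg at hneg
          exact absurd (hr'U i hneg) (not_lt.2 hi.2.le)
  have hSne : S.Nonempty := by
    obtain ⟨m, hm⟩ := hTne
    exact ⟨m, hTS m hm⟩
  -- equality of the two natural-number infima
  have hinf : sInf S = sInf T := by
    apply le_antisymm
    · exact Nat.sInf_le (hTS _ (Nat.sInf_mem hTne))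
    · obtain ⟨m, hmT, hmk⟩ := hST _ (Nat.sInf_mem hSne)
      exact le_trans (Nat.sInf_le hmT) hmk
  -- now convert to the real infimum
  have hcount : tukeyCount x 0 = sInf T := by
    rw [tukeyCount]; exact hinf
  have himg : {v : ℝ | ∃ r : EuclideanSpace ℝ (Fin d),
      (∀ i, (inner ℝ (x i) r : ℝ) ≠ 0) ∧
      v = (min ((Finset.univ.filter fun i => (0 : ℝ) < inner ℝ (x i) r).card)
          ((Finset.univ.filter fun i => (inner ℝ (x i) r : ℝ) < 0).card) : ℝ) / n}
      = (fun m : ℕ => (m : ℝ) / n) '' T := by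
    ext v
    constructor
    · rintro ⟨r, hr, rfl⟩
      exact ⟨_, ⟨r, hr, rfl⟩, by push_cast; ring⟩
    · rintro ⟨m, ⟨r, hr, rfl⟩, rfl⟩
      exact ⟨r, hr, by push_cast; ring⟩
  rw [tukeyDepth, hcount, himg]
  symm
  apply le_antisymm
  · exact csInf_le ⟨0, by rintro v ⟨m, _, rfl⟩; positivity⟩
      ⟨sInf T, Nat.sInf_mem hTne, rfl⟩
  · refine le_csInf ⟨_, sInf T, Nat.sInf_mem hTne, rfl⟩ ?_
    rintro v ⟨m, hm, rfl⟩
    rcases Nat.eq_zero_or_pos n with hn | hn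
    · simp [hn]
    · have h1 : ((sInf T : ℕ) : ℝ) ≤ (m : ℝ) := Nat.cast_le.2 (Nat.sInf_le hm)
      have h2 : (0:ℝ) < (n : ℝ) := by exact_mod_cast hn
      show ((sInf T : ℕ) : ℝ) / (n:ℝ) ≤ (m:ℝ)/(n:ℝ)
      exact div_le_div_of_nonneg_right h1 h2.le
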